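/- Let (Ω, F, P) be a probability space and (X_n)_{n≥1} a mutually independent sequence of real random variables, each taking values in a fixed set {a_1, …, a_N} of N distinct reals with P(X_n = a_k) > 0 for every n and k, and assume F = σ(X_n : n ≥ 1). Then the linear span of the family {X_1^{α_1} · X_2^{α_2} ⋯ X_n^{α_n} : n ≥ 1, (α_1, …, α_n) ∈ {0, 1, …, N−1}^n} is dense in L²(Ω, F, P). -/

import Mathlib

open MeasureTheory

theorem aux_interp {N : ℕ} (hN : 0 < N) (a : Fin N → ℝ) (ha : Function.Injective a)
    (r : Fin N → ℝ) :
    ∃ c : Fin N → ℝ, ∀ k : Fin N, r k = ∑ j : Fin N, c j * a k ^ (j : ℕ) := by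
  classical
  set q := Lagrange.interpolate Finset.univ a r with hq
  refine ⟨fun j => q.coeff j, fun k => ?_⟩
  have hdeg : q.natDegree < N := by
    rcases eq_or_ne q 0 with h | h
    · simpa [h] using hN
    · have := Lagrange.degree_interpolate_lt (s := Finset.univ) r (fun x _ y _ h => ha h)
      rw [← hq] at this
      have h2 : q.degree < (N : ℕ) := by simpa using this
      exact (Polynomial.natDegree_lt_iff_degree_lt h).2 h2
  have := Polynomial.eval_eq_sum_range' hdeg (a k)
  have heval : q.eval (a k) = r k :=
    Lagrange.eval_interpolate_at_node r (fun x _ y _ h => ha h) (Finset.mem_univ k)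
  rw [heval] at this
  rw [this, ← Fin.sum_univ_eq_sum_range (fun j => q.coeff j * a k ^ j)]


/-- If `(X n)` is a mutually independent sequence of random
variables, each taking values in a fixed set of `N` distinct reals
`a 0, …, a (N-1)` with `P(X n = a k) > 0` for all `n, k`, and generating the
σ-algebra of `Ω`, then the linear span of the products
`X 0 ^ α₀ ⋯ X (n-1) ^ α_{n-1}` with exponents in `{0, …, N-1}` is dense in
`L²(Ω, F, P)`. -/
theorem stmt_14 {Ω : Type*} [MeasurableSpace Ω] (P : Measure Ω)
    [IsProbabilityMeasure P] (X : ℕ → Ω → ℝ) (hXm : ∀ n, Measurable (X n))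
    (hindep : ProbabilityTheory.iIndepFun X P)
    (N : ℕ) (a : Fin N → ℝ) (ha : Function.Injective a)
    (hval : ∀ n ω, ∃ k : Fin N, X n ω = a k)
    (hpos : ∀ (n : ℕ) (k : Fin N), 0 < P {ω | X n ω = a k})
    (hgen : (inferInstance : MeasurableSpace Ω) =
      ⨆ n : ℕ, MeasurableSpace.comap (X n) (inferInstance : MeasurableSpace ℝ)) :
    Dense (↑(Submodule.span ℝ
      {f : Lp ℝ 2 P | ∃ (n : ℕ) (α : Fin n → Fin N),
        ∀ᵐ ω ∂P, f ω = ∏ i : Fin n, X i ω ^ (α i : ℕ)}) :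
        Set (Lp ℝ 2 P)) := by
  classical
  -- basic facts
  have hΩ : Nonempty Ω := by
    rcases isEmpty_or_nonempty Ω with h | h
    · exfalso
      have h1 : P Set.univ = 1 := measure_univ
      rw [Set.univ_eq_empty_iff.2 h] at h1
      simp at h1
    · exact h
  have hN : 0 < N := by
    obtain ⟨ω⟩ := hΩ
    obtain ⟨k, -⟩ := hval 0 ω
    exact k.pos
  set M : ℝ := 1 + ∑ k : Fin N, |a k| with hM
  have hM1 : (1:ℝ) ≤ M := by
    have : (0:ℝ) ≤ ∑ k : Fin N, |a k| := Finset.sum_nonneg fun k _ => abs_nonneg _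
    linarith
  have hXbd : ∀ n ω, |X n ω| ≤ M := by
    intro n ω
    obtain ⟨k, hk⟩ := hval n ω
    rw [hk, hM]
    have : |a k| ≤ ∑ j : Fin N, |a j| :=
      Finset.single_le_sum (f := fun j => |a j|) (fun j _ => abs_nonneg _) (Finset.mem_univ k)
    linarith
  set K := Submodule.span ℝ
      {f : Lp ℝ 2 P | ∃ (n : ℕ) (α : Fin n → Fin N),
        ∀ᵐ ω ∂P, f ω = ∏ i : Fin n, X i ω ^ (α i : ℕ)} with hK
  rw [Submodule.dense_iff_topologicalClosure_eq_top,
    Submodule.topologicalClosure_eq_top_iff, Submodule.eq_bot_iff]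
  intro g hg
  set G : Ω → ℝ := ⇑g with hG
  have hGmem : MemLp G 2 P := Lp.memLp g
  have hGint : Integrable G P := hGmem.integrable one_le_two
  -- Step B: (see below) orthogonality against the monomial products
  have keyB : ∀ (n : ℕ) (α : Fin n → Fin N),
      ∫ ω, (∏ i : Fin n, X i ω ^ (α i : ℕ)) * G ω ∂P = 0 := by
    intro n α
    set f0 : Ω → ℝ := fun ω => ∏ i : Fin n, X i ω ^ (α i : ℕ) with hf0def
    have hf0m : Measurable f0 :=
      Finset.measurable_prod _ (fun i _ => (hXm i).pow_const _)
    have hf0bd : ∀ ω, ‖f0 ω‖ ≤ (M ^ N) ^ n := by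
      intro ω
      rw [hf0def]
      simp only [Real.norm_eq_abs]
      rw [Finset.abs_prod]
      calc ∏ i : Fin n, |X i ω ^ (α i : ℕ)|
          ≤ ∏ _i : Fin n, M ^ N := by
            refine Finset.prod_le_prod (fun i _ => abs_nonneg _) (fun i _ => ?_)
            rw [abs_pow]
            calc |X i ω| ^ (α i : ℕ) ≤ M ^ (α i : ℕ) :=
                  pow_le_pow_left₀ (abs_nonneg _) (hXbd i ω) _
              _ ≤ M ^ N := pow_le_pow_right₀ hM1 (le_of_lt (α i).2)
        _ = (M ^ N) ^ n := by rw [Finset.prod_const, Finset.card_univ, Fintype.card_fin]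
    have hf0 : MemLp f0 2 P :=
      MemLp.of_bound hf0m.aestronglyMeasurable _ (Filter.Eventually.of_forall hf0bd)
    set f : Lp ℝ 2 P := hf0.toLp f0 with hfdef
    have hfK : f ∈ K := by
      refine Submodule.subset_span ⟨n, α, ?_⟩
      filter_upwards [hf0.coeFn_toLp] with ω h
      rw [h]
    have hinner : inner ℝ f g = (0 : ℝ) := (Submodule.mem_orthogonal K g).1 hg f hfK
    rw [MeasureTheory.L2.inner_def] at hinner
    simp only [RCLike.inner_apply, starRingEnd_apply, star_trivial] at hinner
    rw [← hinner]
    refine integral_congr_ae ?_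
    filter_upwards [hf0.coeFn_toLp] with ω h
    rw [h]; exact mul_comm _ _
  -- Step C: integral of G vanishes on cylinder sets
  have keyC : ∀ (n : ℕ) (B : Fin n → Set ℝ), (∀ i, MeasurableSet (B i)) →
      ∫ ω in ⋂ i : Fin n, X i ⁻¹' (B i), G ω ∂P = 0 := by
    intro n B hB
    set s : Set Ω := ⋂ i : Fin n, X i ⁻¹' (B i) with hsdef
    have hsm : MeasurableSet s := MeasurableSet.iInter fun i => (hXm i) (hB i)
    have hc : ∀ i : Fin n, ∃ c : Fin N → ℝ,
        ∀ k : Fin N, (if a k ∈ B i then (1:ℝ) else 0) = ∑ j : Fin N, c j * a k ^ (j : ℕ) :=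
      fun i => aux_interp hN a ha _
    choose c hc using hc
    have hfac : ∀ (i : Fin n) (ω : Ω),
        (if X i ω ∈ B i then (1:ℝ) else 0) = ∑ j : Fin N, c i j * X i ω ^ (j : ℕ) := by
      intro i ω
      obtain ⟨k, hk⟩ := hval i ω
      rw [hk]
      exact hc i k
    have hpt : ∀ ω : Ω, Set.indicator s (fun _ => (1:ℝ)) ω =
        ∑ x ∈ Fintype.piFinset (fun _ : Fin n => (Finset.univ : Finset (Fin N))),
          (∏ i : Fin n, c i (x i)) * ∏ i : Fin n, X i ω ^ ((x i : ℕ)) := by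
      intro ω
      have h1 : Set.indicator s (fun _ => (1:ℝ)) ω
          = ∏ i : Fin n, (if X i ω ∈ B i then (1:ℝ) else 0) := by
        by_cases hω : ω ∈ s
        · rw [Set.indicator_of_mem hω]
          have : ∀ i : Fin n, X i ω ∈ B i := by
            intro i
            have := Set.mem_iInter.1 hω i
            exact this
          rw [Finset.prod_congr rfl (fun i _ => if_pos (this i))]
          simp
        · rw [Set.indicator_of_notMem hω]
          rw [hsdef, Set.mem_iInter] at hω
          push_neg at hω
          obtain ⟨i, hi⟩ := hω
          exact (Finset.prod_eq_zero (Finset.mem_univ i)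
            (show (if X i ω ∈ B i then (1:ℝ) else 0) = 0 from if_neg hi)).symm
      rw [h1]
      calc ∏ i : Fin n, (if X i ω ∈ B i then (1:ℝ) else 0)
          = ∏ i : Fin n, ∑ j ∈ (Finset.univ : Finset (Fin N)), c i j * X i ω ^ (j : ℕ) := by
            exact Finset.prod_congr rfl (fun i _ => hfac i ω)
        _ = ∑ x ∈ Fintype.piFinset (fun _ : Fin n => (Finset.univ : Finset (Fin N))),
              ∏ i : Fin n, (c i (x i) * X i ω ^ ((x i : ℕ))) := Finset.prod_univ_sum _ _
        _ = ∑ x ∈ Fintype.piFinset (fun _ : Fin n => (Finset.univ : Finset (Fin N))),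
              (∏ i : Fin n, c i (x i)) * ∏ i : Fin n, X i ω ^ ((x i : ℕ)) := by
            exact Finset.sum_congr rfl (fun x _ => Finset.prod_mul_distrib)
    rw [← integral_indicator hsm]
    have hind : ∀ ω, Set.indicator s G ω = Set.indicator s (fun _ => (1:ℝ)) ω * G ω := by
      intro ω
      by_cases hω : ω ∈ s <;> simp [Set.indicator_of_mem, Set.indicator_of_notMem, hω]
    calc ∫ ω, Set.indicator s G ω ∂P
        = ∫ ω, ∑ x ∈ Fintype.piFinset (fun _ : Fin n => (Finset.univ : Finset (Fin N))),
            (∏ i : Fin n, c i (x i)) * ((∏ i : Fin n, X i ω ^ ((x i : ℕ))) * G ω) ∂P := by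
          refine integral_congr_ae (Filter.Eventually.of_forall fun ω => ?_)
          rw [hind ω, hpt ω, Finset.sum_mul]
          exact Finset.sum_congr rfl (fun x _ => by ring)
      _ = ∑ x ∈ Fintype.piFinset (fun _ : Fin n => (Finset.univ : Finset (Fin N))),
            ∫ ω, (∏ i : Fin n, c i (x i)) * ((∏ i : Fin n, X i ω ^ ((x i : ℕ))) * G ω) ∂P := by
          refine integral_finset_sum _ (fun x _ => ?_)
          refine Integrable.const_mul ?_ _
          refine Integrable.bdd_mul (c := (M ^ N) ^ n) hGint ?_ ?_
          · have hmeas : Measurable (fun ω => ∏ i : Fin n, X i ω ^ ((x i : ℕ))) :=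
              Finset.measurable_prod _ (fun i _ => (hXm i).pow_const _)
            exact hmeas.aestronglyMeasurable
          · refine Filter.Eventually.of_forall fun ω => ?_
            simp only [Real.norm_eq_abs]
            rw [Finset.abs_prod]
            calc ∏ i : Fin n, |X i ω ^ ((x i : ℕ))|
                ≤ ∏ _i : Fin n, M ^ N := by
                  refine Finset.prod_le_prod (fun i _ => abs_nonneg _) (fun i _ => ?_)
                  rw [abs_pow]
                  calc |X i ω| ^ ((x i : ℕ)) ≤ M ^ ((x i : ℕ)) :=
                        pow_le_pow_left₀ (abs_nonneg _) (hXbd i ω) _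
                    _ ≤ M ^ N := pow_le_pow_right₀ hM1 (le_of_lt (x i).2)
              _ = (M ^ N) ^ n := by
                  rw [Finset.prod_const, Finset.card_univ, Fintype.card_fin]
      _ = 0 := by
          refine Finset.sum_eq_zero (fun x _ => ?_)
          rw [integral_const_mul, keyB n x, mul_zero]
  -- Step D: integral of G vanishes on all measurable sets
  have huniv : ∫ ω, G ω ∂P = 0 := by
    have := keyC 0 (fun i => Set.univ) (fun i => MeasurableSet.univ)
    simpa using this
  have keyD : ∀ t : Set Ω, MeasurableSet t → ∫ ω in t, G ω ∂P = 0 := by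
    have h_eq : (inferInstance : MeasurableSpace Ω) = MeasurableSpace.generateFrom
        (piiUnionInter (fun n => {s | MeasurableSet[MeasurableSpace.comap (X n)
          (inferInstance : MeasurableSpace ℝ)] s}) Set.univ) := by
      rw [generateFrom_piiUnionInter_measurableSet
        (fun n => MeasurableSpace.comap (X n) (inferInstance : MeasurableSpace ℝ)) Set.univ, hgen]
      simp
    intro t ht
    refine MeasurableSpace.induction_on_inter
      (C := fun t _ => ∫ ω in t, G ω ∂P = 0) h_eq ?_ ?_ ?_ ?_ ?_ t ht
    · exact isPiSystem_piiUnionInter _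
        (fun n => @MeasurableSpace.isPiSystem_measurableSet Ω
          (MeasurableSpace.comap (X n) (inferInstance : MeasurableSpace ℝ))) _
    · simp
    · rintro u ⟨T, -, f, hf, rfl⟩
      have hf' : ∀ x ∈ T, ∃ B : Set ℝ, MeasurableSet B ∧ X x ⁻¹' B = f x := by
        intro x hx
        exact MeasurableSpace.measurableSet_comap.1 (hf x hx)
      choose! B hBm hBe using hf'
      set n : ℕ := T.sup id + 1 with hn
      set B' : Fin n → Set ℝ := fun i => if (i : ℕ) ∈ T then B i else Set.univ with hB'
      have hiff : ⋂ x ∈ T, f x = ⋂ i : Fin n, X i ⁻¹' (B' i) := by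
        ext ω
        simp only [Set.mem_iInter, Set.mem_preimage]
        constructor
        · intro h i
          by_cases hi : (i : ℕ) ∈ T
          · simp only [hB', if_pos hi]
            have := h i hi
            rw [← hBe i hi] at this
            exact this
          · simp [hB', if_neg hi]
        · intro h x hx
          have hxn : x < n := Nat.lt_succ_of_le (Finset.le_sup (f := id) hx)
          have := h ⟨x, hxn⟩
          simp only [hB', if_pos hx] at this
          rw [← hBe x hx]
          exact this
      rw [hiff]
      refine keyC n B' (fun i => ?_)
      by_cases hi : (i : ℕ) ∈ T
      · simpa [hB', if_pos hi] using hBm i hi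
      · simp [hB', if_neg hi]
    · intro u hu h0
      have := integral_add_compl hu hGint
      rw [h0, huniv] at this
      linarith
    · intro f hd hm hC
      rw [integral_iUnion hm hd hGint.integrableOn]
      simp [hC]
  -- conclude
  have hG0 : G =ᵐ[P] 0 :=
    ae_eq_zero_of_forall_setIntegral_eq_of_sigmaFinite
      (fun s _ _ => hGint.integrableOn) (fun s hs _ => keyD s hs)
  exact Lp.eq_zero_iff_ae_eq_zero.2 hG0
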